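/- For positive integers τ, σ, n with n ≥ τσ, the number of simple tiles of periodic solutions with temporal period τ, spatial period σ, and exactly s = τσ/d distinct states (where d is a divisor of gcd(τ,σ)) equals φ(d) · C(n, s) · (s-1)!, where C(n,s) is the binomial coefficient and φ is the Euler totient. -/

import Mathlib

/-- The set of distinct states appearing in a tile. -/
def states (n τ σ : ℕ) [NeZero τ] [NeZero σ] (T : ZMod τ → ZMod σ → ZMod n) :
    Finset (ZMod n) :=
  Finset.image (fun p : ZMod τ × ZMod σ => T p.1 p.2) Finset.univ

/-- The set of distinct row-adjacent pairs appearing in a tile (the assignments). -/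
def pairs (n τ σ : ℕ) [NeZero τ] [NeZero σ] (T : ZMod τ → ZMod σ → ZMod n) :
    Finset (ZMod n × ZMod n) :=
  Finset.image (fun p : ZMod τ × ZMod σ => (T p.1 p.2, T p.1 (p.2 + 1))) Finset.univ

/-- `T` is generated by the rule `f`. -/
def GenBy (n τ σ : ℕ) (f : ZMod n → ZMod n → ZMod n) (T : ZMod τ → ZMod σ → ZMod n) : Prop :=
  ∀ i j, T (i + 1) (j + 1) = f (T i j) (T i (j + 1))

/-- The temporal period `τ` of `T` is minimal. -/
def MinTemporal (n τ σ : ℕ) (T : ZMod τ → ZMod σ → ZMod n) : Prop :=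
  ∀ t : ZMod τ, t ≠ 0 → ∃ i j, T (i + t) j ≠ T i j

/-- The spatial period `σ` of `T` is minimal. -/
def MinSpatial (n τ σ : ℕ) (T : ZMod τ → ZMod σ → ZMod n) : Prop :=
  ∀ c : ZMod σ, c ≠ 0 → ∃ i j, T i (j + c) ≠ T i j

/-- `T` is simple: its assignment number equals its number of states. -/
def Simple (n τ σ : ℕ) [NeZero τ] [NeZero σ] (T : ZMod τ → ZMod σ → ZMod n) : Prop :=
  (pairs n τ σ T).card = (states n τ σ T).card

section Tiles
variable {n τ σ : ℕ} [NeZero n] [NeZero τ] [NeZero σ]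
set_option linter.unusedSectionVars false

/-- The stabilizer of a tile under space-time shifts. -/
def stabT (T : ZMod τ → ZMod σ → ZMod n) : AddSubgroup (ZMod τ × ZMod σ) where
  carrier := {v | ∀ i j, T (i + v.1) (j + v.2) = T i j}
  zero_mem' := by intro i j; simp
  add_mem' := by
    rintro ⟨a1, a2⟩ ⟨b1, b2⟩ ha hb i j
    have h1 := ha (i + b1) (j + b2)
    have h2 := hb i j
    simp only at h1 h2 ⊢
    calc T (i + (a1 + b1)) (j + (a2 + b2)) = T (i + b1 + a1) (j + b2 + a2) := by ring_nf
      _ = T (i + b1) (j + b2) := h1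
      _ = T i j := h2
  neg_mem' := by
    rintro ⟨a1, a2⟩ ha i j
    have h1 := ha (i - a1) (j - a2)
    simp only at h1 ⊢
    calc T (i + -a1) (j + -a2) = T (i - a1) (j - a2) := by ring_nf
      _ = T (i - a1 + a1) (j - a2 + a2) := h1.symm
      _ = T i j := by ring_nf

lemma mem_stabT {T : ZMod τ → ZMod σ → ZMod n} {v : ZMod τ × ZMod σ} :
    v ∈ stabT T ↔ ∀ i j, T (i + v.1) (j + v.2) = T i j := Iff.rfl

lemma simple_step {T : ZMod τ → ZMod σ → ZMod n} (hS : Simple n τ σ T)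
    {i j i' j'} (h : T i j = T i' j') : T i (j + 1) = T i' (j' + 1) := by
  classical
  have himg : (pairs n τ σ T).image Prod.fst = states n τ σ T := by
    unfold pairs states
    rw [Finset.image_image]
    rfl
  have hinj : Set.InjOn Prod.fst (↑(pairs n τ σ T) : Set (ZMod n × ZMod n)) :=
    Finset.injOn_of_card_image_eq (s := pairs n τ σ T) (f := Prod.fst) (by rw [himg, ← hS])
  have h1 : (T i j, T i (j + 1)) ∈ pairs n τ σ T :=
    Finset.mem_image.mpr ⟨(i, j), Finset.mem_univ _, rfl⟩
  have h2 : (T i' j', T i' (j' + 1)) ∈ pairs n τ σ T :=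
    Finset.mem_image.mpr ⟨(i', j'), Finset.mem_univ _, rfl⟩
  have := hinj (Finset.mem_coe.mpr h1) (Finset.mem_coe.mpr h2) (by simpa using h)
  exact congrArg Prod.snd this

lemma stepC {T : ZMod τ → ZMod σ → ZMod n} (hS : Simple n τ σ T)
    (c : ZMod σ) {i j i' j'} (h : T i j = T i' j') : T i (j + c) = T i' (j' + c) := by
  have hnat : ∀ (m : ℕ) {i : ZMod τ} {j : ZMod σ} {i' j'}, T i j = T i' j' →
      T i (j + (m : ZMod σ)) = T i' (j' + (m : ZMod σ)) := by
    intro m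
    induction m with
    | zero => intro i j i' j' h; simpa using h
    | succ k ih =>
      intro i j i' j' h
      have hk := ih h
      have := simple_step hS hk
      push_cast
      calc T i (j + ((k : ZMod σ) + 1)) = T i (j + k + 1) := by ring_nf
        _ = T i' (j' + k + 1) := this
        _ = T i' (j' + ((k : ZMod σ) + 1)) := by ring_nf
  have := hnat c.val h
  simpa [ZMod.natCast_val, ZMod.cast_id] using this

lemma stepD {T : ZMod τ → ZMod σ → ZMod n} {f} (hG : GenBy n τ σ f T) (hS : Simple n τ σ T)
    {i j i' j'} (h : T i j = T i' j') : T (i + 1) (j + 1) = T (i' + 1) (j' + 1) := by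
  rw [hG i j, hG i' j', h, simple_step hS h]

lemma key_shift {T : ZMod τ → ZMod σ → ZMod n} {f} (hG : GenBy n τ σ f T) (hS : Simple n τ σ T)
    {i j i' j'} (h : T i j = T i' j') (t : ZMod τ) (c : ZMod σ) :
    T (i + t) (j + c) = T (i' + t) (j' + c) := by
  have diag : ∀ (m : ℕ) {i : ZMod τ} {j : ZMod σ} {i' j'}, T i j = T i' j' →
      T (i + (m : ZMod τ)) (j + (m : ZMod σ)) = T (i' + (m : ZMod τ)) (j' + (m : ZMod σ)) := by
    intro m
    induction m with
    | zero => intro i j i' j' h; simpa using h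
    | succ k ih =>
      intro i j i' j' h
      have hk := ih h
      have := stepD hG hS hk
      push_cast
      calc T (i + ((k : ZMod τ) + 1)) (j + ((k : ZMod σ) + 1))
          = T (i + k + 1) (j + k + 1) := by ring_nf
        _ = T (i' + k + 1) (j' + k + 1) := this
        _ = T (i' + ((k : ZMod τ) + 1)) (j' + ((k : ZMod σ) + 1)) := by ring_nf
  have h1 := diag t.val h
  rw [ZMod.natCast_val, ZMod.cast_id] at h1
  set x : ZMod σ := ((t.val : ℕ) : ZMod σ) with hx
  have h2 := stepC hS (c - x) h1
  calc T (i + t) (j + c) = T (i + t) (j + x + (c - x)) := by ring_nf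
    _ = T (i' + t) (j' + x + (c - x)) := h2
    _ = T (i' + t) (j' + c) := by ring_nf

lemma mem_stabT_iff {T : ZMod τ → ZMod σ → ZMod n} {f} (hG : GenBy n τ σ f T)
    (hS : Simple n τ σ T) {i j i' j'} :
    (i' - i, j' - j) ∈ stabT T ↔ T i j = T i' j' := by
  constructor
  · intro h
    have := h i j
    simp only at this
    calc T i j = T (i + (i' - i)) (j + (j' - j)) := this.symm
      _ = T i' j' := by ring_nf
  · intro h p q
    have := key_shift hG hS h (p - i) (q - j)
    simp only
    calc T (p + (i' - i)) (q + (j' - j)) = T (i' + (p - i)) (j' + (q - j)) := by ring_nf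
      _ = T (i + (p - i)) (j + (q - j)) := this.symm
      _ = T p q := by ring_nf

lemma fn_stab_iff {T : ZMod τ → ZMod σ → ZMod n} {f} (hG : GenBy n τ σ f T)
    (hS : Simple n τ σ T) (v w : ZMod τ × ZMod σ) :
    T v.1 v.2 = T w.1 w.2 ↔ v - w ∈ stabT T := by
  rw [← AddSubgroup.neg_mem_iff, neg_sub]
  exact (mem_stabT_iff hG hS).symm

end Tiles

open AddSubgroup

section Aux
variable {G β : Type*} [AddCommGroup G]

noncomputable def liftH (H : AddSubgroup G) (f : G → β)
    (hf : ∀ v w : G, v - w ∈ H → f v = f w) : G ⧸ H → β :=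
  fun q => Quotient.liftOn' q f (fun v w h => by
    apply hf
    have h1 : -v + w ∈ H := QuotientAddGroup.leftRel_apply.mp h
    have h2 := H.neg_mem h1
    simpa [neg_add_rev, sub_eq_add_neg, add_comm] using h2)

lemma liftH_mk (H : AddSubgroup G) (f : G → β) (hf) (v : G) :
    liftH H f hf (v : G ⧸ H) = f v := rfl

lemma liftH_injective (H : AddSubgroup G) (f : G → β)
    (hf : ∀ v w : G, f v = f w ↔ v - w ∈ H) :
    Function.Injective (liftH H f (fun v w h => (hf v w).mpr h)) := by
  intro q1 q2
  induction q1 using QuotientAddGroup.induction_on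
  induction q2 using QuotientAddGroup.induction_on
  rename_i v w
  intro h
  rw [liftH_mk, liftH_mk] at h
  have := (hf v w).mp h
  rw [QuotientAddGroup.eq]
  simpa [neg_add_rev, sub_eq_add_neg, add_comm] using H.neg_mem this

lemma range_liftH (H : AddSubgroup G) (f : G → β) (hf) :
    Set.range (liftH H f hf) = Set.range f := by
  ext x
  constructor
  · rintro ⟨q, rfl⟩
    induction q using QuotientAddGroup.induction_on
    exact ⟨_, rfl⟩
  · rintro ⟨v, rfl⟩
    exact ⟨v, rfl⟩

lemma card_range_eq_card_quot (H : AddSubgroup G) (f : G → β)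
    (hf : ∀ v w : G, f v = f w ↔ v - w ∈ H) :
    Nat.card (Set.range f) = Nat.card (G ⧸ H) := by
  rw [← range_liftH H f (fun v w h => (hf v w).mpr h)]
  exact Nat.card_range_of_injective (liftH_injective H f hf)

end Aux

section Main
variable {n τ σ : ℕ} [NeZero n] [NeZero τ] [NeZero σ]
set_option linter.unusedSectionVars false

/-- The full goodness predicate on tiles. -/
def GoodT (n τ σ : ℕ) [NeZero τ] [NeZero σ] (s : ℕ) (T : ZMod τ → ZMod σ → ZMod n) : Prop :=
  (∃ f, GenBy n τ σ f T) ∧ MinTemporal n τ σ T ∧ MinSpatial n τ σ T ∧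
    Simple n τ σ T ∧ (states n τ σ T).card = s

/-- Goodness predicate on subgroups of the shift group. -/
def GoodH (τ σ d : ℕ) [NeZero τ] [NeZero σ] (H : AddSubgroup (ZMod τ × ZMod σ)) : Prop :=
  Nat.card H = d ∧ (∀ t : ZMod τ, (t, (0 : ZMod σ)) ∈ H → t = 0) ∧
    (∀ c : ZMod σ, ((0 : ZMod τ), c) ∈ H → c = 0)

lemma states_coe (T : ZMod τ → ZMod σ → ZMod n) :
    (states n τ σ T : Set (ZMod n)) = Set.range (fun p : ZMod τ × ZMod σ => T p.1 p.2) := by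
  simp [states]

lemma card_states_eq_card_quot {T : ZMod τ → ZMod σ → ZMod n} {f} (hG : GenBy n τ σ f T)
    (hS : Simple n τ σ T) :
    (states n τ σ T).card = Nat.card ((ZMod τ × ZMod σ) ⧸ stabT T) := by
  rw [← Nat.card_eq_finsetCard]
  have : Nat.card (states n τ σ T) =
      Nat.card (Set.range (fun p : ZMod τ × ZMod σ => T p.1 p.2)) := by
    exact Nat.card_congr (Equiv.setCongr (states_coe T))
  rw [this]
  exact card_range_eq_card_quot (stabT T) _ (fn_stab_iff hG hS)

lemma card_A : Nat.card (ZMod τ × ZMod σ) = τ * σ := by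
  simp [Nat.card_prod, Nat.card_zmod]

lemma good_stab {d s : ℕ} (hgcd : d ∣ Nat.gcd τ σ) (hsd : s * d = τ * σ)
    {T : ZMod τ → ZMod σ → ZMod n} (hT : GoodT n τ σ s T) : GoodH τ σ d (stabT T) := by
  obtain ⟨⟨f, hG⟩, hMT, hMS, hS, hst⟩ := hT
  have hτ : (τ : ℕ) ≠ 0 := NeZero.ne τ
  have hd0 : d ≠ 0 := by
    rintro rfl
    exact hτ (Nat.eq_zero_of_gcd_eq_zero_left (Nat.eq_zero_of_zero_dvd hgcd))
  have hs0 : s ≠ 0 := by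
    rintro rfl
    rw [zero_mul] at hsd
    rcases Nat.mul_eq_zero.mp hsd.symm with h | h
    · exact hτ h
    · exact (NeZero.ne σ) h
  have hquot : Nat.card ((ZMod τ × ZMod σ) ⧸ stabT T) = s := by
    rw [← card_states_eq_card_quot hG hS, hst]
  have hlag := AddSubgroup.card_eq_card_quotient_mul_card_addSubgroup (stabT T)
  rw [card_A, hquot] at hlag
  refine ⟨?_, ?_, ?_⟩
  · have : s * d = s * Nat.card (stabT T) := by rw [hsd, hlag]
    exact (Nat.eq_of_mul_eq_mul_left (Nat.pos_of_ne_zero hs0) this).symm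
  · intro t ht
    by_contra hne
    obtain ⟨i, j, hij⟩ := hMT t hne
    exact hij (by simpa using ht i j)
  · intro c hc
    by_contra hne
    obtain ⟨i, j, hij⟩ := hMS c hne
    exact hij (by simpa using hc i j)

lemma card_quot_of_goodH {d s : ℕ} (hgcd : d ∣ Nat.gcd τ σ) (hsd : s * d = τ * σ)
    {H : AddSubgroup (ZMod τ × ZMod σ)} (hH : GoodH τ σ d H) :
    Nat.card ((ZMod τ × ZMod σ) ⧸ H) = s := by
  have hτ : (τ : ℕ) ≠ 0 := NeZero.ne τ
  have hd0 : d ≠ 0 := by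
    rintro rfl
    exact hτ (Nat.eq_zero_of_gcd_eq_zero_left (Nat.eq_zero_of_zero_dvd hgcd))
  have hlag := AddSubgroup.card_eq_card_quotient_mul_card_addSubgroup H
  rw [card_A, hH.1] at hlag
  have : Nat.card ((ZMod τ × ZMod σ) ⧸ H) * d = s * d := by rw [← hlag, hsd]
  exact Nat.eq_of_mul_eq_mul_right (Nat.pos_of_ne_zero hd0) this

/-- The tile associated to a subgroup and an embedding of the quotient. -/
def tileFrom (H : AddSubgroup (ZMod τ × ZMod σ)) (b : ((ZMod τ × ZMod σ) ⧸ H) ↪ ZMod n) :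
    ZMod τ → ZMod σ → ZMod n :=
  fun i j => b (QuotientAddGroup.mk (i, j))

lemma tileFrom_apply (H : AddSubgroup (ZMod τ × ZMod σ)) (b : ((ZMod τ × ZMod σ) ⧸ H) ↪ ZMod n) (i : ZMod τ) (j : ZMod σ) :
    tileFrom H b i j = b (QuotientAddGroup.mk (i, j)) := rfl

lemma mk_add_pair (H : AddSubgroup (ZMod τ × ZMod σ)) (i t : ZMod τ) (j c : ZMod σ) :
    (QuotientAddGroup.mk (i + t, j + c) : (ZMod τ × ZMod σ) ⧸ H) =
      QuotientAddGroup.mk (i, j) + QuotientAddGroup.mk (t, c) := by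
  rw [← QuotientAddGroup.mk_add]
  rfl

lemma stab_tileFrom {d : ℕ} {H : AddSubgroup (ZMod τ × ZMod σ)} (hH : GoodH τ σ d H)
    (b : ((ZMod τ × ZMod σ) ⧸ H) ↪ ZMod n) : stabT (tileFrom H b) = H := by
  ext ⟨t, c⟩
  rw [mem_stabT]
  constructor
  · intro h
    have := h 0 0
    simp only [tileFrom_apply, zero_add] at this
    have h0 : (QuotientAddGroup.mk (t, c) : (ZMod τ × ZMod σ) ⧸ H) = QuotientAddGroup.mk (0, 0) :=
      b.injective this
    rw [QuotientAddGroup.eq] at h0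
    have h1 : ((-t, -c) : ZMod τ × ZMod σ) ∈ H := by simpa using h0
    simpa using H.neg_mem h1
  · intro h i j
    simp only [tileFrom_apply]
    congr 1
    rw [mk_add_pair]
    have : (QuotientAddGroup.mk (t, c) : (ZMod τ × ZMod σ) ⧸ H) = 0 :=
      (QuotientAddGroup.eq_zero_iff _).mpr h
    rw [this, add_zero]

lemma card_image_comp_mk (H : AddSubgroup (ZMod τ × ZMod σ)) {β : Type*} [DecidableEq β]
    (g : ((ZMod τ × ZMod σ) ⧸ H) → β) (hg : Function.Injective g) :
    (Finset.image (fun p : ZMod τ × ZMod σ => g (QuotientAddGroup.mk p)) Finset.univ).card =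
      Nat.card ((ZMod τ × ZMod σ) ⧸ H) := by
  rw [← Nat.card_eq_finsetCard]
  have hcoe : ((Finset.image (fun p : ZMod τ × ZMod σ => g (QuotientAddGroup.mk p))
      Finset.univ : Finset β) : Set β) = Set.range g := by
    rw [Finset.coe_image, Finset.coe_univ, Set.image_univ]
    exact Function.Surjective.range_comp (fun q => QuotientAddGroup.induction_on q
      (fun p => ⟨p, rfl⟩)) g
  rw [← Nat.card_range_of_injective hg]
  exact Nat.card_congr (Equiv.setCongr hcoe)

lemma good_tileFrom {d s : ℕ} (hgcd : d ∣ Nat.gcd τ σ) (hsd : s * d = τ * σ)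
    {H : AddSubgroup (ZMod τ × ZMod σ)} (hH : GoodH τ σ d H)
    (b : ((ZMod τ × ZMod σ) ⧸ H) ↪ ZMod n) : GoodT n τ σ s (tileFrom H b) := by
  have hstates : (states n τ σ (tileFrom H b)).card = s := by
    rw [← card_quot_of_goodH hgcd hsd hH]
    exact card_image_comp_mk H b b.injective
  refine ⟨?_, ?_, ?_, ?_, hstates⟩
  · refine ⟨fun x _ => b (Function.invFun b x + QuotientAddGroup.mk (1, 1)), fun i j => ?_⟩
    have h1 : Function.invFun b (b (QuotientAddGroup.mk (i, j))) = QuotientAddGroup.mk (i, j) :=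
      Function.leftInverse_invFun b.injective _
    simp only [tileFrom_apply]
    rw [h1, ← mk_add_pair]
  · intro t ht
    by_contra hcon
    push_neg at hcon
    have := hcon 0 0
    simp only [tileFrom_apply, zero_add] at this
    have h0 := b.injective this
    rw [QuotientAddGroup.eq] at h0
    have h1 : ((-t, (0 : ZMod σ)) : ZMod τ × ZMod σ) ∈ H := by simpa using h0
    exact ht (hH.2.1 t (by simpa using H.neg_mem h1))
  · intro c hc
    by_contra hcon
    push_neg at hcon
    have := hcon 0 0
    simp only [tileFrom_apply, zero_add] at this
    have h0 := b.injective this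
    rw [QuotientAddGroup.eq] at h0
    have h1 : (((0 : ZMod τ), -c) : ZMod τ × ZMod σ) ∈ H := by simpa using h0
    exact hc (hH.2.2 c (by simpa using H.neg_mem h1))
  · unfold Simple
    rw [hstates, ← card_quot_of_goodH hgcd hsd hH]
    have hpairs : pairs n τ σ (tileFrom H b) = Finset.image
        (fun p : ZMod τ × ZMod σ =>
          ((b (QuotientAddGroup.mk p), b (QuotientAddGroup.mk p + QuotientAddGroup.mk (0, 1)))
            : ZMod n × ZMod n)) Finset.univ := by
      unfold pairs
      have hfun : (fun p : ZMod τ × ZMod σ =>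
          ((tileFrom H b) p.1 p.2, (tileFrom H b) p.1 (p.2 + 1))) =
          (fun p : ZMod τ × ZMod σ =>
            (b (QuotientAddGroup.mk p),
              b (QuotientAddGroup.mk p + QuotientAddGroup.mk (0, 1)))) := by
        funext p
        simp only [tileFrom_apply]
        congr 2
        rw [← QuotientAddGroup.mk_add]
        congr 1
        simp [Prod.ext_iff]
      rw [hfun]
    rw [hpairs]
    exact card_image_comp_mk H
      (fun q => ((b q, b (q + QuotientAddGroup.mk (0, 1))) : ZMod n × ZMod n))
      (fun q1 q2 h => b.injective (congrArg Prod.fst h))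

/-- The embedding of the quotient by the stabilizer induced by a good tile. -/
noncomputable def embOf {s : ℕ} {T : ZMod τ → ZMod σ → ZMod n} (hT : GoodT n τ σ s T) :
    ((ZMod τ × ZMod σ) ⧸ stabT T) ↪ ZMod n :=
  ⟨liftH (stabT T) (fun p => T p.1 p.2)
      (fun v w h => (fn_stab_iff hT.1.choose_spec hT.2.2.2.1 v w).mpr h),
    liftH_injective (stabT T) _ (fn_stab_iff hT.1.choose_spec hT.2.2.2.1)⟩

lemma embOf_mk {s : ℕ} {T : ZMod τ → ZMod σ → ZMod n} (hT : GoodT n τ σ s T)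
    (v : ZMod τ × ZMod σ) : embOf hT (QuotientAddGroup.mk v) = T v.1 v.2 := rfl

lemma sigma_emb_ext {d : ℕ} {H1 H2 : {H : AddSubgroup (ZMod τ × ZMod σ) // GoodH τ σ d H}}
    (b1 : ((ZMod τ × ZMod σ) ⧸ (H1 : AddSubgroup (ZMod τ × ZMod σ))) ↪ ZMod n)
    (b2 : ((ZMod τ × ZMod σ) ⧸ (H2 : AddSubgroup (ZMod τ × ZMod σ))) ↪ ZMod n)
    (h : (H1 : AddSubgroup (ZMod τ × ZMod σ)) = H2)
    (hb : ∀ v : ZMod τ × ZMod σ, b1 (QuotientAddGroup.mk v) = b2 (QuotientAddGroup.mk v)) :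
    (⟨H1, b1⟩ : Σ H : {H : AddSubgroup (ZMod τ × ZMod σ) // GoodH τ σ d H},
        ((ZMod τ × ZMod σ) ⧸ (H : AddSubgroup (ZMod τ × ZMod σ))) ↪ ZMod n) = ⟨H2, b2⟩ := by
  obtain ⟨H1, hH1⟩ := H1
  obtain ⟨H2, hH2⟩ := H2
  dsimp only at h
  subst h
  have hb2 : b1 = b2 := Function.Embedding.ext fun q =>
    QuotientAddGroup.induction_on q fun v => hb v
  subst hb2
  rfl

/-- The classification of good tiles. -/
noncomputable def equivX {d s : ℕ} (hgcd : d ∣ Nat.gcd τ σ) (hsd : s * d = τ * σ) :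
    {T : ZMod τ → ZMod σ → ZMod n // GoodT n τ σ s T} ≃
      Σ H : {H : AddSubgroup (ZMod τ × ZMod σ) // GoodH τ σ d H},
        ((ZMod τ × ZMod σ) ⧸ (H : AddSubgroup (ZMod τ × ZMod σ))) ↪ ZMod n where
  toFun T := ⟨⟨stabT T.1, good_stab hgcd hsd T.2⟩, embOf T.2⟩
  invFun p := ⟨tileFrom p.1.1 p.2, good_tileFrom hgcd hsd p.1.2 p.2⟩
  left_inv T := by
    apply Subtype.ext
    funext i j
    rfl
  right_inv p := by
    obtain ⟨⟨H, hH⟩, b⟩ := p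
    apply sigma_emb_ext
    · exact stab_tileFrom hH b
    · intro v
      rfl

section NT

lemma torsion_eq {N d : ℕ} [NeZero N] (hdN : d ∣ N) (y : ZMod N) (hy : d • y = 0) :
    ∃ k : ℕ, y = ((k * (N / d) : ℕ) : ZMod N) := by
  have hd0 : 0 < d := by
    rcases Nat.eq_zero_or_pos d with h | h
    · subst h
      exact absurd (Nat.eq_zero_of_zero_dvd hdN) (NeZero.ne N)
    · exact h
  have h1 : ((d * y.val : ℕ) : ZMod N) = 0 := by
    push_cast
    rw [ZMod.natCast_zmod_val, ← nsmul_eq_mul]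
    exact hy
  rw [ZMod.natCast_eq_zero_iff] at h1
  obtain ⟨c, hc⟩ : (N / d) ∣ y.val := by
    obtain ⟨e, rfl⟩ := hdN
    rw [Nat.mul_div_cancel_left e hd0]
    exact (Nat.mul_dvd_mul_iff_left hd0).mp h1
  exact ⟨c, by rw [← ZMod.natCast_zmod_val y, hc, Nat.mul_comm]⟩

lemma cast_mul_div_eq_zero {N d : ℕ} [NeZero N] (hdN : d ∣ N) (k : ℕ) (hk : d ∣ k) :
    ((k * (N / d) : ℕ) : ZMod N) = 0 := by
  rw [ZMod.natCast_eq_zero_iff]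
  obtain ⟨e, rfl⟩ := hk
  obtain ⟨f, rfl⟩ := hdN
  have hd0 : 0 < d := by
    rcases Nat.eq_zero_or_pos d with h | h
    · subst h
      exact absurd (by simp : (0 * f : ℕ) = 0) (NeZero.ne (0 * f))
    · exact h
  rw [Nat.mul_div_cancel_left f hd0]
  exact ⟨e, by ring⟩

lemma zsmul_natCast_eq {N : ℕ} (k : ℤ) (a : ℕ) :
    k • ((a : ZMod N)) = ((k * a : ℤ) : ZMod N) := by
  rw [zsmul_eq_mul]
  push_cast
  ring

lemma int_dvd_of_dvd_mul_div {N d : ℕ} [NeZero N] (hdN : d ∣ N) {k : ℤ}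
    (h : (N : ℤ) ∣ k * ((N / d : ℕ) : ℤ)) : (d : ℤ) ∣ k := by
  have hd0 : 0 < d := by
    rcases Nat.eq_zero_or_pos d with h' | h'
    · subst h'
      exact absurd (Nat.eq_zero_of_zero_dvd hdN) (NeZero.ne N)
    · exact h'
  obtain ⟨e, rfl⟩ := hdN
  have he0 : e ≠ 0 := by
    rintro rfl
    exact (NeZero.ne (d * 0)) (by simp)
  rw [Nat.mul_div_cancel_left e hd0] at h
  push_cast at h
  obtain ⟨c, hc⟩ := h
  refine ⟨c, ?_⟩
  have he0' : (e : ℤ) ≠ 0 := Int.natCast_ne_zero.mpr he0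
  apply mul_right_cancel₀ he0'
  rw [hc]
  ring

end NT

section Subgroups
variable {τ σ : ℕ} [NeZero τ] [NeZero σ]

/-- Generator of the good subgroup indexed by `m`. -/
def genH (τ σ d m : ℕ) : ZMod τ × ZMod σ :=
  (((τ / d : ℕ) : ZMod τ), ((m * (σ / d) : ℕ) : ZMod σ))

lemma int_cast_dN {N d : ℕ} (hdN : d ∣ N) : ((d : ℤ) * ((N / d : ℕ) : ℤ)) = (N : ℤ) := by
  rw [show ((d : ℤ) * ((N / d : ℕ) : ℤ)) = ((d * (N / d) : ℕ) : ℤ) by push_cast; ring,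
    Nat.mul_div_cancel' hdN]

lemma addOrderOf_div_cast {N d : ℕ} [NeZero N] (hdN : d ∣ N) (hd0 : d ≠ 0) :
    addOrderOf (((N / d : ℕ)) : ZMod N) = d := by
  rw [ZMod.addOrderOf_coe _ (NeZero.ne N)]
  rw [Nat.gcd_eq_right (Nat.div_dvd_of_dvd hdN)]
  exact Nat.div_div_self hdN (NeZero.ne N)

lemma addOrderOf_mul_div_cast {N d m : ℕ} [NeZero N] (hdN : d ∣ N) (hd0 : d ≠ 0)
    (hm : Nat.Coprime m d) :
    addOrderOf (((m * (N / d) : ℕ)) : ZMod N) = d := by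
  rw [ZMod.addOrderOf_coe _ (NeZero.ne N)]
  have hg : N.gcd (m * (N / d)) = N / d := by
    have hN : N = d * (N / d) := (Nat.mul_div_cancel' hdN).symm
    calc N.gcd (m * (N / d)) = (d * (N / d)).gcd (m * (N / d)) := by rw [← hN]
      _ = (d.gcd m) * (N / d) := Nat.gcd_mul_right d (N / d) m
      _ = N / d := by rw [Nat.Coprime.gcd_eq_one (Nat.Coprime.symm hm)]; ring
  rw [hg]
  exact Nat.div_div_self hdN (NeZero.ne N)

lemma addOrderOf_genH {d m : ℕ} (hdτ : d ∣ τ) (hdσ : d ∣ σ) (hd0 : d ≠ 0)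
    (hm : Nat.Coprime m d) : addOrderOf (genH τ σ d m) = d := by
  rw [Prod.addOrderOf]
  show Nat.lcm (addOrderOf (((τ / d : ℕ)) : ZMod τ))
    (addOrderOf (((m * (σ / d) : ℕ)) : ZMod σ)) = d
  rw [addOrderOf_div_cast hdτ hd0, addOrderOf_mul_div_cast hdσ hd0 hm, Nat.lcm_self]

lemma goodH_genH {d m : ℕ} (hdτ : d ∣ τ) (hdσ : d ∣ σ) (hd0 : d ≠ 0)
    (hm : Nat.Coprime m d) :
    GoodH τ σ d (AddSubgroup.zmultiples (genH τ σ d m)) := by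
  refine ⟨?_, ?_, ?_⟩
  · rw [Nat.card_zmultiples]
    exact addOrderOf_genH hdτ hdσ hd0 hm
  · intro t ht
    obtain ⟨k, hk⟩ := AddSubgroup.mem_zmultiples_iff.mp ht
    have h2 : k • ((m * (σ / d) : ℕ) : ZMod σ) = 0 := congrArg Prod.snd hk
    rw [zsmul_natCast_eq] at h2
    rw [ZMod.intCast_zmod_eq_zero_iff_dvd] at h2
    have hdd : (d : ℤ) ∣ k * m := by
      apply int_dvd_of_dvd_mul_div hdσ
      rw [show ((k * (m : ℤ)) * ((σ / d : ℕ) : ℤ)) = k * ((m * (σ / d) : ℕ) : ℤ) by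
        push_cast; ring]
      exact h2
    have hdk : (d : ℤ) ∣ k :=
      (Nat.Coprime.isCoprime (Nat.Coprime.symm hm)).dvd_of_dvd_mul_right hdd
    have h1 : k • ((τ / d : ℕ) : ZMod τ) = t := congrArg Prod.fst hk
    rw [zsmul_natCast_eq] at h1
    rw [← h1]
    rw [ZMod.intCast_zmod_eq_zero_iff_dvd]
    obtain ⟨e, rfl⟩ := hdk
    refine ⟨e, ?_⟩
    rw [show ((d : ℤ) * e * ((τ / d : ℕ) : ℤ)) = ((d : ℤ) * ((τ / d : ℕ) : ℤ)) * e by ring,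
      int_cast_dN hdτ]
  · intro c hc
    obtain ⟨k, hk⟩ := AddSubgroup.mem_zmultiples_iff.mp hc
    have h1 : k • ((τ / d : ℕ) : ZMod τ) = 0 := congrArg Prod.fst hk
    rw [zsmul_natCast_eq] at h1
    rw [ZMod.intCast_zmod_eq_zero_iff_dvd] at h1
    have hdk : (d : ℤ) ∣ k := int_dvd_of_dvd_mul_div hdτ h1
    have h2 : k • ((m * (σ / d) : ℕ) : ZMod σ) = c := congrArg Prod.snd hk
    rw [zsmul_natCast_eq] at h2
    rw [← h2]
    rw [ZMod.intCast_zmod_eq_zero_iff_dvd]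
    obtain ⟨e, rfl⟩ := hdk
    refine ⟨e * m, ?_⟩
    rw [Nat.cast_mul,
      show ((d : ℤ) * e * ((m : ℕ) * ((σ / d : ℕ) : ℤ))) =
        ((d : ℤ) * ((σ / d : ℕ) : ℤ)) * (e * (m : ℕ)) by ring,
      int_cast_dN hdσ]

variable {d : ℕ}

/-- The good subgroup associated with a unit mod `d`. -/
noncomputable def PhiH [NeZero d] (hdτ : d ∣ τ) (hdσ : d ∣ σ) (u : (ZMod d)ˣ) :
    {H : AddSubgroup (ZMod τ × ZMod σ) // GoodH τ σ d H} :=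
  ⟨AddSubgroup.zmultiples (genH τ σ d ((u : ZMod d)).val),
    goodH_genH hdτ hdσ (NeZero.ne d) (ZMod.val_coe_unit_coprime u)⟩

lemma PhiH_injective [NeZero d] (hdτ : d ∣ τ) (hdσ : d ∣ σ) :
    Function.Injective (PhiH (τ := τ) (σ := σ) (d := d) hdτ hdσ) := by
  intro u1 u2 h
  set m1 := ((u1 : ZMod d)).val with hm1
  set m2 := ((u2 : ZMod d)).val with hm2
  have hval : (AddSubgroup.zmultiples (genH τ σ d m1)) =
      (AddSubgroup.zmultiples (genH τ σ d m2)) := congrArg Subtype.val h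
  have hg : genH τ σ d m1 ∈ AddSubgroup.zmultiples (genH τ σ d m2) := by
    rw [← hval]
    exact AddSubgroup.mem_zmultiples _
  obtain ⟨k, hk⟩ := AddSubgroup.mem_zmultiples_iff.mp hg
  have hfst : k • ((τ / d : ℕ) : ZMod τ) = ((τ / d : ℕ) : ZMod τ) := congrArg Prod.fst hk
  rw [zsmul_natCast_eq] at hfst
  have h1 : (((k - 1) * ((τ / d : ℕ) : ℤ) : ℤ) : ZMod τ) = 0 := by
    rw [show ((k - 1) * ((τ / d : ℕ) : ℤ) : ℤ) =
      (k * ((τ / d : ℕ) : ℤ)) - ((τ / d : ℕ) : ℤ) by ring]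
    rw [Int.cast_sub, hfst, Int.cast_natCast, sub_self]
  rw [ZMod.intCast_zmod_eq_zero_iff_dvd] at h1
  have hk1 : (d : ℤ) ∣ k - 1 := int_dvd_of_dvd_mul_div hdτ h1
  have hsnd : k • ((m2 * (σ / d) : ℕ) : ZMod σ) = ((m1 * (σ / d) : ℕ) : ZMod σ) :=
    congrArg Prod.snd hk
  rw [zsmul_natCast_eq] at hsnd
  have h2 : (((k * m2 - m1) * ((σ / d : ℕ) : ℤ) : ℤ) : ZMod σ) = 0 := by
    rw [show ((k * m2 - m1) * ((σ / d : ℕ) : ℤ) : ℤ) =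
      (k * ((m2 * (σ / d) : ℕ) : ℤ)) - ((m1 * (σ / d) : ℕ) : ℤ) by push_cast; ring]
    rw [Int.cast_sub, hsnd, Int.cast_natCast, sub_self]
  rw [ZMod.intCast_zmod_eq_zero_iff_dvd] at h2
  have hk2 : (d : ℤ) ∣ k * m2 - m1 := int_dvd_of_dvd_mul_div hdσ h2
  have hk3 : (d : ℤ) ∣ (m2 : ℤ) - m1 := by
    have := Int.dvd_sub hk2 (Dvd.dvd.mul_right hk1 (m2 : ℤ))
    rw [show (k * m2 - m1 - (k - 1) * m2 : ℤ) = (m2 : ℤ) - m1 by ring] at this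
    exact this
  have hmod : m1 ≡ m2 [MOD d] := (Nat.modEq_iff_dvd).mpr hk3
  have hcast : ((m1 : ℕ) : ZMod d) = ((m2 : ℕ) : ZMod d) :=
    (ZMod.natCast_eq_natCast_iff _ _ _).mpr hmod
  rw [hm1, hm2, ZMod.natCast_zmod_val, ZMod.natCast_zmod_val] at hcast
  exact Units.ext hcast

lemma PhiH_surjective [NeZero d] (hdτ : d ∣ τ) (hdσ : d ∣ σ) :
    Function.Surjective (PhiH (τ := τ) (σ := σ) (d := d) hdτ hdσ) := by
  have hd0 : d ≠ 0 := NeZero.ne d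
  have hdpos : 0 < d := Nat.pos_of_ne_zero hd0
  rintro ⟨H, hcard, hax1, hax2⟩
  have hnsmul : ∀ x ∈ H, d • x = (0 : ZMod τ × ZMod σ) := by
    intro x hx
    have h : Nat.card H • (⟨x, hx⟩ : H) = 0 := card_nsmul_eq_zero'
    rw [hcard] at h
    have h2 := congrArg (fun z : H => (z : ZMod τ × ZMod σ)) h
    simpa using h2
  have hmem1 : ∀ x : H, ((x : ZMod τ × ZMod σ)).1 ∈
      AddSubgroup.zmultiples (((τ / d : ℕ) : ZMod τ)) := by
    intro x
    have hx1 : d • ((x : ZMod τ × ZMod σ)).1 = 0 :=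
      congrArg Prod.fst (hnsmul x x.2)
    obtain ⟨k, hk⟩ := torsion_eq hdτ _ hx1
    refine AddSubgroup.mem_zmultiples_iff.mpr ⟨(k : ℤ), ?_⟩
    rw [zsmul_natCast_eq, hk, Int.cast_mul, Int.cast_natCast, Int.cast_natCast, Nat.cast_mul]
  set ψ : H → AddSubgroup.zmultiples (((τ / d : ℕ) : ZMod τ)) :=
    fun x => ⟨((x : ZMod τ × ZMod σ)).1, hmem1 x⟩ with hψ
  have hinj : Function.Injective ψ := by
    intro x y hxy
    have h1 : ((x : ZMod τ × ZMod σ)).1 = ((y : ZMod τ × ZMod σ)).1 :=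
      congrArg Subtype.val hxy
    have h1' : (((x - y : H) : ZMod τ × ZMod σ)).1 = 0 := by
      rw [AddSubgroup.coe_sub]
      exact sub_eq_zero.mpr h1
    have hmemxy : (((0 : ZMod τ), (((x - y : H) : ZMod τ × ZMod σ)).2) :
        ZMod τ × ZMod σ) ∈ H := by
      have hm := (x - y : H).2
      rwa [show ((x - y : H) : ZMod τ × ZMod σ) =
        ((0 : ZMod τ), (((x - y : H) : ZMod τ × ZMod σ)).2) from Prod.ext h1' rfl] at hm
    have h2' := hax2 _ hmemxy
    have h3 : ((x - y : H) : ZMod τ × ZMod σ) = 0 := by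
      rw [show (0 : ZMod τ × ZMod σ) = ((0 : ZMod τ), (0 : ZMod σ)) from rfl]
      exact Prod.ext h1' h2'
    have h4 : (x : ZMod τ × ZMod σ) = y := by
      rw [AddSubgroup.coe_sub] at h3
      exact sub_eq_zero.mp h3
    exact Subtype.ext h4
  have hbij : Function.Bijective ψ := by
    refine (Nat.bijective_iff_injective_and_card ψ).mpr ⟨hinj, ?_⟩
    rw [hcard, Nat.card_zmultiples, addOrderOf_div_cast hdτ hd0]
  obtain ⟨⟨x12, hxH⟩, hx⟩ := hbij.2 ⟨(((τ / d : ℕ) : ZMod τ)),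
    AddSubgroup.mem_zmultiples _⟩
  have hx1 : x12.1 = (((τ / d : ℕ)) : ZMod τ) := congrArg Subtype.val hx
  have hd2 : d • x12.2 = 0 := congrArg Prod.snd (hnsmul x12 hxH)
  obtain ⟨m', hm'⟩ := torsion_eq hdσ x12.2 hd2
  have hτd0 : (τ / d) ≠ 0 := by
    have := Nat.div_pos (Nat.le_of_dvd (Nat.pos_of_ne_zero (NeZero.ne τ)) hdτ) hdpos
    omega
  have hcop : Nat.Coprime m' d := by
    by_contra hnc
    have hg1 : Nat.gcd m' d ≠ 1 := hnc
    have hgd : Nat.gcd m' d ∣ d := Nat.gcd_dvd_right m' d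
    have hgm : Nat.gcd m' d ∣ m' := Nat.gcd_dvd_left m' d
    have hg0 : Nat.gcd m' d ≠ 0 := fun h => hd0 (Nat.eq_zero_of_gcd_eq_zero_right h)
    set k := d / Nat.gcd m' d with hkdef
    have hk0 : 0 < k := Nat.div_pos (Nat.le_of_dvd hdpos hgd) (Nat.pos_of_ne_zero hg0)
    have hkd : k < d := Nat.div_lt_self hdpos
      (lt_of_le_of_ne (Nat.one_le_iff_ne_zero.mpr hg0) (Ne.symm hg1))
    have hmemk : k • x12 ∈ H := AddSubgroup.nsmul_mem H hxH k
    have hdvdkm : d ∣ k * m' := by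
      obtain ⟨m'', hm''⟩ := hgm
      refine ⟨m'', ?_⟩
      rw [hm'', hkdef]
      rw [show d / Nat.gcd m' d * (Nat.gcd m' d * m'') =
        (d / Nat.gcd m' d * Nat.gcd m' d) * m'' by ring]
      rw [Nat.div_mul_cancel hgd]
    have hsnd : (k • x12).2 = 0 := by
      have hsmul2 : (k • x12).2 = k • x12.2 :=
        map_nsmul (AddMonoidHom.snd (ZMod τ) (ZMod σ)) k x12
      rw [hsmul2, hm']
      rw [show k • ((m' * (σ / d) : ℕ) : ZMod σ) = ((k * (m' * (σ / d)) : ℕ) : ZMod σ) by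
        rw [nsmul_eq_mul]; push_cast; ring]
      rw [show (k * (m' * (σ / d)) : ℕ) = (k * m') * (σ / d) by ring]
      exact cast_mul_div_eq_zero hdσ _ hdvdkm
    have hfst0 : (k • x12).1 = 0 := by
      apply hax1
      have hm := hmemk
      rwa [show (k • x12 : ZMod τ × ZMod σ) =
        (((k • x12).1, (0 : ZMod σ)) : ZMod τ × ZMod σ) from Prod.ext rfl hsnd] at hm
    have hsmul1 : (k • x12).1 = k • x12.1 :=
      map_nsmul (AddMonoidHom.fst (ZMod τ) (ZMod σ)) k x12
    rw [hsmul1] at hfst0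
    have hfst0' : k • x12.1 = 0 := hfst0
    rw [hx1] at hfst0'
    rw [show k • ((τ / d : ℕ) : ZMod τ) = ((k * (τ / d) : ℕ) : ZMod τ) by
      rw [nsmul_eq_mul]; push_cast; ring] at hfst0'
    rw [ZMod.natCast_eq_zero_iff] at hfst0'
    have : d * (τ / d) ∣ k * (τ / d) := by rw [Nat.mul_div_cancel' hdτ]; exact hfst0'
    have hdk : d ∣ k := (Nat.mul_dvd_mul_iff_right (Nat.pos_of_ne_zero hτd0)).mp this
    exact absurd (Nat.le_of_dvd hk0 hdk) (not_le.mpr hkd)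
  have hord : addOrderOf x12 = d := by
    apply Nat.dvd_antisymm
    · exact addOrderOf_dvd_of_nsmul_eq_zero (hnsmul x12 hxH)
    · have h1 : addOrderOf x12.1 ∣ addOrderOf x12 :=
        addOrderOf_map_dvd (AddMonoidHom.fst (ZMod τ) (ZMod σ)) x12
      rwa [hx1, addOrderOf_div_cast hdτ hd0] at h1
  have hzle : AddSubgroup.zmultiples x12 ≤ H := AddSubgroup.zmultiples_le_of_mem hxH
  have hHeq : AddSubgroup.zmultiples x12 = H := by
    have hsets : (AddSubgroup.zmultiples x12 : Set (ZMod τ × ZMod σ)) =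
        (H : Set (ZMod τ × ZMod σ)) := by
      apply Set.eq_of_subset_of_ncard_le hzle
      · rw [← Nat.card_coe_set_eq, ← Nat.card_coe_set_eq]
        have e1 : Nat.card (H : Set (ZMod τ × ZMod σ)) = Nat.card H :=
          Nat.card_congr (Equiv.refl _)
        have e2 : Nat.card (AddSubgroup.zmultiples x12 : Set (ZMod τ × ZMod σ)) =
            Nat.card (AddSubgroup.zmultiples x12) := Nat.card_congr (Equiv.refl _)
        rw [e1, e2, hcard, Nat.card_zmultiples, hord]
    exact SetLike.coe_injective hsets
  refine ⟨ZMod.unitOfCoprime m' hcop, ?_⟩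
  apply Subtype.ext
  show AddSubgroup.zmultiples
    (genH τ σ d (((ZMod.unitOfCoprime m' hcop : (ZMod d)ˣ) : ZMod d)).val) = H
  rw [← hHeq]
  congr 1
  have hvu : (((ZMod.unitOfCoprime m' hcop : (ZMod d)ˣ) : ZMod d)).val = m' % d := by
    rw [ZMod.coe_unitOfCoprime, ZMod.val_natCast]
  rw [hvu]
  apply Prod.ext
  · exact hx1.symm
  · show ((m' % d * (σ / d) : ℕ) : ZMod σ) = x12.2
    rw [hm']
    rw [ZMod.natCast_eq_natCast_iff]
    have := Nat.ModEq.mul_right' (c := σ / d) (Nat.mod_modEq m' d)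
    rwa [Nat.mul_div_cancel' hdσ] at this

lemma card_goodH [NeZero d] (hdτ : d ∣ τ) (hdσ : d ∣ σ) :
    Nat.card {H : AddSubgroup (ZMod τ × ZMod σ) // GoodH τ σ d H} = Nat.totient d := by
  rw [← Nat.card_eq_of_bijective (PhiH hdτ hdσ) ⟨PhiH_injective hdτ hdσ, PhiH_surjective hdτ hdσ⟩]
  rw [Nat.card_eq_fintype_card, ZMod.card_units_eq_totient]

end Subgroups

lemma congrT (T : ZMod τ → ZMod σ → ZMod n) {a a' : ZMod τ} {b b' : ZMod σ}
    (ha : a = a') (hb : b = b') : T a b = T a' b' := by rw [ha, hb]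

lemma states_shift (T : ZMod τ → ZMod σ → ZMod n) (v : ZMod τ × ZMod σ) :
    states n τ σ (fun i j => T (i + v.1) (j + v.2)) = states n τ σ T := by
  unfold states
  have h1 : (fun p : ZMod τ × ZMod σ => T (p.1 + v.1) (p.2 + v.2)) =
      (fun p : ZMod τ × ZMod σ => T p.1 p.2) ∘ (Equiv.addRight v) := rfl
  rw [h1, ← Finset.image_image, Finset.image_univ_equiv]

lemma pairs_shift (T : ZMod τ → ZMod σ → ZMod n) (v : ZMod τ × ZMod σ) :
    pairs n τ σ (fun i j => T (i + v.1) (j + v.2)) = pairs n τ σ T := by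
  unfold pairs
  have h1 : (fun p : ZMod τ × ZMod σ => (T (p.1 + v.1) (p.2 + v.2), T (p.1 + v.1) (p.2 + 1 + v.2))) =
      (fun p : ZMod τ × ZMod σ => (T p.1 p.2, T p.1 (p.2 + 1))) ∘ (Equiv.addRight v) := by
    funext p
    show (T (p.1 + v.1) (p.2 + v.2), T (p.1 + v.1) (p.2 + 1 + v.2)) =
      (T (p.1 + v.1) (p.2 + v.2), T (p.1 + v.1) (p.2 + v.2 + 1))
    rw [congrT T rfl (show p.2 + 1 + v.2 = p.2 + v.2 + 1 by ring)]
  rw [h1, ← Finset.image_image, Finset.image_univ_equiv]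

lemma goodT_shift {s : ℕ} {T : ZMod τ → ZMod σ → ZMod n} (hT : GoodT n τ σ s T)
    (v : ZMod τ × ZMod σ) : GoodT n τ σ s (fun i j => T (i + v.1) (j + v.2)) := by
  obtain ⟨⟨f, hG⟩, hMT, hMS, hS, hst⟩ := hT
  refine ⟨⟨f, fun i j => ?_⟩, fun t ht => ?_, fun c hc => ?_, ?_, ?_⟩
  · show T (i + 1 + v.1) (j + 1 + v.2) = f (T (i + v.1) (j + v.2)) (T (i + v.1) (j + 1 + v.2))
    rw [congrT T (show i + 1 + v.1 = i + v.1 + 1 by ring) (show j + 1 + v.2 = j + v.2 + 1 by ring),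
      hG (i + v.1) (j + v.2), congrT T rfl (show j + v.2 + 1 = j + 1 + v.2 by ring)]
  · obtain ⟨i, j, hij⟩ := hMT t ht
    refine ⟨i - v.1, j - v.2, ?_⟩
    show T (i - v.1 + t + v.1) (j - v.2 + v.2) ≠ T (i - v.1 + v.1) (j - v.2 + v.2)
    rw [congrT T (show i - v.1 + t + v.1 = i + t by ring) (show j - v.2 + v.2 = j by ring),
      congrT T (show i - v.1 + v.1 = i by ring) (show j - v.2 + v.2 = j by ring)]
    exact hij
  · obtain ⟨i, j, hij⟩ := hMS c hc
    refine ⟨i - v.1, j - v.2, ?_⟩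
    show T (i - v.1 + v.1) (j - v.2 + c + v.2) ≠ T (i - v.1 + v.1) (j - v.2 + v.2)
    rw [congrT T (show i - v.1 + v.1 = i by ring) (show j - v.2 + c + v.2 = j + c by ring),
      congrT T (show i - v.1 + v.1 = i by ring) (show j - v.2 + v.2 = j by ring)]
    exact hij
  · show Simple n τ σ _
    unfold Simple
    rw [states_shift, pairs_shift]
    exact hS
  · rw [states_shift]
    exact hst

variable {d s : ℕ}

/-- The space-time rotation relation on good tiles. -/
def rG (n τ σ s : ℕ) [NeZero τ] [NeZero σ]
    (x y : {T : ZMod τ → ZMod σ → ZMod n // GoodT n τ σ s T}) : Prop :=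
  ∃ (t : ZMod τ) (c : ZMod σ), ∀ i j, y.1 i j = x.1 (i + t) (j + c)

lemma rG_equivalence : Equivalence (rG n τ σ s) := by
  constructor
  · intro x
    exact ⟨0, 0, fun i j => by rw [add_zero, add_zero]⟩
  · rintro x y ⟨t, c, h⟩
    refine ⟨-t, -c, fun i j => ?_⟩
    rw [h (i + -t) (j + -c)]
    exact congrT x.1 (by ring) (by ring)
  · rintro x y z ⟨t, c, h⟩ ⟨t', c', h'⟩
    refine ⟨t + t', c + c', fun i j => ?_⟩
    rw [h' i j, h (i + t') (j + c')]
    exact congrT x.1 (by ring) (by ring)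

lemma card_fiber (hgcd : d ∣ Nat.gcd τ σ) (hsd : s * d = τ * σ)
    (x : {T : ZMod τ → ZMod σ → ZMod n // GoodT n τ σ s T}) :
    Nat.card {y : {T : ZMod τ → ZMod σ → ZMod n // GoodT n τ σ s T} // rG n τ σ s x y} = s := by
  set Φx : (ZMod τ × ZMod σ) → {T : ZMod τ → ZMod σ → ZMod n // GoodT n τ σ s T} :=
    fun v => ⟨fun i j => x.1 (i + v.1) (j + v.2), goodT_shift x.2 v⟩ with hΦx
  have hiff : ∀ v w, Φx v = Φx w ↔ v - w ∈ stabT x.1 := by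
    intro v w
    constructor
    · intro h
      have h' : ∀ i j, x.1 (i + v.1) (j + v.2) = x.1 (i + w.1) (j + w.2) := fun i j =>
        congrFun (congrFun (congrArg Subtype.val h) i) j
      intro i j
      calc x.1 (i + (v - w).1) (j + (v - w).2)
          = x.1 (i - w.1 + v.1) (j - w.2 + v.2) := congrT x.1
            (by simp only [Prod.fst_sub]; ring) (by simp only [Prod.snd_sub]; ring)
        _ = x.1 (i - w.1 + w.1) (j - w.2 + w.2) := h' _ _
        _ = x.1 i j := congrT x.1 (by ring) (by ring)
    · intro h
      apply Subtype.ext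
      funext i j
      show x.1 (i + v.1) (j + v.2) = x.1 (i + w.1) (j + w.2)
      have := h (i + w.1) (j + w.2)
      calc x.1 (i + v.1) (j + v.2)
          = x.1 (i + w.1 + (v - w).1) (j + w.2 + (v - w).2) := congrT x.1
            (by simp only [Prod.fst_sub]; ring) (by simp only [Prod.snd_sub]; ring)
        _ = x.1 (i + w.1) (j + w.2) := this
  have h1 : Nat.card (Set.range Φx) = Nat.card ((ZMod τ × ZMod σ) ⧸ stabT x.1) :=
    card_range_eq_card_quot _ _ hiff
  have h2 : {y : {T : ZMod τ → ZMod σ → ZMod n // GoodT n τ σ s T} // rG n τ σ s x y} ≃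
      Set.range Φx := by
    apply Equiv.subtypeEquivRight
    intro y
    constructor
    · rintro ⟨t, c, h⟩
      exact ⟨(t, c), (Subtype.ext (funext fun i => funext fun j => (h i j).symm))⟩
    · rintro ⟨v, hv⟩
      exact ⟨v.1, v.2, fun i j => by rw [← hv]⟩
  rw [Nat.card_congr h2, h1, card_quot_of_goodH hgcd hsd (good_stab hgcd hsd x.2)]

lemma card_quot_mul (hgcd : d ∣ Nat.gcd τ σ) (hsd : s * d = τ * σ) :
    Nat.card (Quot (rG n τ σ s)) * s =
      Nat.card {T : ZMod τ → ZMod σ → ZMod n // GoodT n τ σ s T} := by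
  classical
  letI : Fintype (Quot (rG n τ σ s)) := Fintype.ofFinite _
  letI : ∀ q : Quot (rG n τ σ s), Fintype {y // Quot.mk (rG n τ σ s) y = q} :=
    fun q => Fintype.ofFinite _
  have h1 : Nat.card {T : ZMod τ → ZMod σ → ZMod n // GoodT n τ σ s T} =
      Nat.card (Σ q : Quot (rG n τ σ s), {y // Quot.mk (rG n τ σ s) y = q}) :=
    Nat.card_congr (Equiv.sigmaFiberEquiv _).symm
  have h2 : ∀ q : Quot (rG n τ σ s), Nat.card {y // Quot.mk (rG n τ σ s) y = q} = s := by
    apply Quot.ind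
    intro x
    have hq : ∀ y, (Quot.mk (rG n τ σ s) y = Quot.mk (rG n τ σ s) x) ↔ rG n τ σ s x y := by
      intro y
      rw [Quot.eq]
      constructor
      · intro h
        exact rG_equivalence.symm (rG_equivalence.eqvGen_iff.mp h)
      · intro h
        exact rG_equivalence.eqvGen_iff.mpr (rG_equivalence.symm h)
    rw [Nat.card_congr (Equiv.subtypeEquivRight hq)]
    exact card_fiber hgcd hsd x
  have h3 : ∀ q : Quot (rG n τ σ s), Fintype.card {y // Quot.mk (rG n τ σ s) y = q} = s :=
    fun q => by rw [← Nat.card_eq_fintype_card]; exact h2 q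
  have h4 : Nat.card (Σ q : Quot (rG n τ σ s), {y // Quot.mk (rG n τ σ s) y = q}) =
      ∑ q : Quot (rG n τ σ s), Fintype.card {y // Quot.mk (rG n τ σ s) y = q} := by
    rw [Nat.card_eq_fintype_card, Fintype.card_sigma]
  rw [h1, h4, Finset.sum_congr rfl (fun q _ => h3 q), Finset.sum_const, smul_eq_mul,
    Finset.card_univ, Nat.card_eq_fintype_card]

lemma card_emb (hgcd : d ∣ Nat.gcd τ σ) (hsd : s * d = τ * σ)
    {H : AddSubgroup (ZMod τ × ZMod σ)} (hH : GoodH τ σ d H) :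
    Nat.card (((ZMod τ × ZMod σ) ⧸ H) ↪ ZMod n) = Nat.descFactorial n s := by
  classical
  letI : Fintype ((ZMod τ × ZMod σ) ⧸ H) := Fintype.ofFinite _
  letI : Fintype (((ZMod τ × ZMod σ) ⧸ H) ↪ ZMod n) := Fintype.ofFinite _
  rw [Nat.card_eq_fintype_card, Fintype.card_embedding_eq, ZMod.card n]
  congr 1
  rw [← Nat.card_eq_fintype_card]
  exact card_quot_of_goodH hgcd hsd hH

lemma card_X (hgcd : d ∣ Nat.gcd τ σ) (hsd : s * d = τ * σ) [NeZero d]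
    (hdτ : d ∣ τ) (hdσ : d ∣ σ) :
    Nat.card {T : ZMod τ → ZMod σ → ZMod n // GoodT n τ σ s T} =
      Nat.totient d * Nat.descFactorial n s := by
  classical
  rw [Nat.card_congr (equivX hgcd hsd)]
  have e : (ZMod d)ˣ ≃ {H : AddSubgroup (ZMod τ × ZMod σ) // GoodH τ σ d H} :=
    Equiv.ofBijective _ ⟨PhiH_injective hdτ hdσ, PhiH_surjective hdτ hdσ⟩
  rw [← Nat.card_congr (Equiv.sigmaCongrLeft
    (β := fun H : {H : AddSubgroup (ZMod τ × ZMod σ) // GoodH τ σ d H} =>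
      ((ZMod τ × ZMod σ) ⧸ (H : AddSubgroup (ZMod τ × ZMod σ))) ↪ ZMod n) e)]
  letI : ∀ u : (ZMod d)ˣ, Fintype (((ZMod τ × ZMod σ) ⧸ ((e u : _) : AddSubgroup _)) ↪ ZMod n) :=
    fun u => Fintype.ofFinite _
  rw [Nat.card_eq_fintype_card, Fintype.card_sigma]
  have h3 : ∀ u : (ZMod d)ˣ,
      Fintype.card (((ZMod τ × ZMod σ) ⧸ ((e u : _) : AddSubgroup _)) ↪ ZMod n) =
        Nat.descFactorial n s := fun u => by
    rw [← Nat.card_eq_fintype_card]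
    exact card_emb hgcd hsd (e u).2
  rw [Finset.sum_congr rfl (fun u _ => h3 u), Finset.sum_const, smul_eq_mul,
    Finset.card_univ, ZMod.card_units_eq_totient]

end Main

/-- The number of simple tiles of periodic solutions with temporal period `τ`,
spatial period `σ`, and exactly `s = τσ/d` distinct states (counted up to
space-time rotation) equals `φ(d) · C(n,s) · (s-1)!`. -/
theorem count_simple_tiles (n τ σ : ℕ) [NeZero n] [NeZero τ] [NeZero σ]
    (hn : τ * σ ≤ n) (d : ℕ) (hd : d ∣ Nat.gcd τ σ) (s : ℕ) (hs : s * d = τ * σ) :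
    Nat.card (Quot (fun (T₁ T₂ : {T : ZMod τ → ZMod σ → ZMod n //
        (∃ f, GenBy n τ σ f T) ∧ MinTemporal n τ σ T ∧ MinSpatial n τ σ T ∧
          Simple n τ σ T ∧ (states n τ σ T).card = s}) =>
      ∃ (t : ZMod τ) (c : ZMod σ), ∀ i j, T₂.1 i j = T₁.1 (i + t) (j + c))) =
    Nat.totient d * Nat.choose n s * Nat.factorial (s - 1) := by
  have hdτ : d ∣ τ := dvd_trans hd (Nat.gcd_dvd_left τ σ)
  have hdσ : d ∣ σ := dvd_trans hd (Nat.gcd_dvd_right τ σ)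
  have hd0 : d ≠ 0 := by
    rintro rfl
    exact (NeZero.ne τ) (Nat.eq_zero_of_zero_dvd hdτ)
  haveI : NeZero d := ⟨hd0⟩
  have hs0 : s ≠ 0 := by
    rintro rfl
    rw [zero_mul] at hs
    rcases Nat.mul_eq_zero.mp hs.symm with h | h
    · exact (NeZero.ne τ) h
    · exact (NeZero.ne σ) h
  have hmain : Nat.card (Quot (rG n τ σ s)) * s = Nat.totient d * Nat.descFactorial n s := by
    rw [card_quot_mul hd hs, card_X hd hs hdτ hdσ]
  have hgoal : Nat.card (Quot (rG n τ σ s)) =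
      Nat.totient d * Nat.choose n s * Nat.factorial (s - 1) := by
    apply Nat.eq_of_mul_eq_mul_right (Nat.pos_of_ne_zero hs0)
    rw [hmain, Nat.descFactorial_eq_factorial_mul_choose]
    rw [show Nat.factorial s = s * Nat.factorial (s - 1) from
      (Nat.mul_factorial_pred hs0).symm]
    ring
  exact hgoal
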